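/- Let N ≥ 2 and K be integers with 1 ≤ K ≤ N−1 and R, c > 0. Define T(x) = Σ_{j=0}^{K−1} C(N−1, j) x^{N−1−j} (1−x)^j and β(x) = (R·(N−1)/(c·K)) · C(N−2, K−1) · ∫_0^x t^{N−K} (1−t)^{K−1} dt. Suppose 0 < x_1 < x_p ≤ 1 satisfy: β(x) ≤ x for all x ∈ [0, x_1], β(x_1) = x_1, β′(x) > 1 for all x ∈ (x_1, x_p), β′(x_p) = 1, and β′(x) ≤ 1 for all x ∈ (x_p, 1]. Define β*(x) = β(x) for x ∈ [0, x_1], β*(x) = x for x ∈ (x_1, x_p], and β*(x) = β(x) − β(x_p) + x_p for x ∈ (x_p, 1]. Then for every q ∈ (0, 1] and every x ∈ [0, 1] with β*(x) ≤ q, (R/K)·T(x) − c·β*(x)/q ≤ (R/K)·T(q) − c·β*(q)/q. -/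

import Mathlib

open Finset

/-- The probability that a user mimicking type `x` is among the top `K` of `N`
users when types are i.i.d. uniform on `[0,1]`. -/
noncomputable def topKProbUnif (N K : ℕ) (x : ℝ) : ℝ :=
  ∑ j ∈ Finset.range K,
    ((N - 1).choose j : ℝ) * x ^ (N - 1 - j) * (1 - x) ^ j

/-- The uncalibrated candidate symmetric equilibrium strategy of mechanism M6
when the type distribution is uniform on `[0,1]`. -/
noncomputable def stratUnif (N K : ℕ) (R c : ℝ) (x : ℝ) : ℝ :=
  R * ((N : ℝ) - 1) / (c * K) * ((N - 2).choose (K - 1) : ℝ) *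
    ∫ t in (0 : ℝ)..x, t ^ (N - K) * (1 - t) ^ (K - 1)

/-- The calibrated strategy `β*` obtained from `β` and the points `x₁ < xₚ`. -/
noncomputable def stratCal (N K : ℕ) (R c : ℝ) (x1 xp : ℝ) (x : ℝ) : ℝ :=
  if x ≤ x1 then stratUnif N K R c x
  else if x ≤ xp then x
  else stratUnif N K R c x - stratUnif N K R c xp + xp

lemma stratUnif_hasDerivAt (N K : ℕ) (R c : ℝ) (x : ℝ) :
    HasDerivAt (stratUnif N K R c)
      (R * ((N : ℝ) - 1) / (c * K) * ((N - 2).choose (K - 1) : ℝ) *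
        (x ^ (N - K) * (1 - x) ^ (K - 1))) x := by
  have hcont : Continuous fun t : ℝ => t ^ (N - K) * (1 - t) ^ (K - 1) := by
    continuity
  exact ((hcont.integral_hasStrictDerivAt 0 x).hasDerivAt).const_mul _

lemma topK_hasDerivAt (N K : ℕ) (hN : 2 ≤ N) (hK : 1 ≤ K) (hKN : K ≤ N - 1) (x : ℝ) :
    HasDerivAt (topKProbUnif N K)
      (((N : ℝ) - 1) * ((N - 2).choose (K - 1) : ℝ) *
        (x ^ (N - 1 - K) * (1 - x) ^ (K - 1))) x := by
  set M := N - 1 with hM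
  have hKM : K ≤ M := hKN
  set D : ℕ → ℝ := fun j =>
    (M.choose j : ℝ) * (((M - j : ℕ) : ℝ) * x ^ (M - j - 1)) * (1 - x) ^ j
      + (M.choose j : ℝ) * x ^ (M - j) * (((j : ℕ) : ℝ) * (1 - x) ^ (j - 1) * (-1)) with hD
  have hsum : HasDerivAt (topKProbUnif N K) (∑ j ∈ Finset.range K, D j) x := by
    have : topKProbUnif N K
        = fun y : ℝ => ∑ j ∈ Finset.range K, (M.choose j : ℝ) * y ^ (M - j) * (1 - y) ^ j := rfl
    rw [this]
    apply HasDerivAt.fun_sum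
    intro j _
    have h1 : HasDerivAt (fun y : ℝ => (M.choose j : ℝ) * y ^ (M - j))
        ((M.choose j : ℝ) * (((M - j : ℕ) : ℝ) * x ^ (M - j - 1))) x :=
      (hasDerivAt_pow (M - j) x).const_mul _
    have h2 : HasDerivAt (fun y : ℝ => (1 - y) ^ j)
        (((j : ℕ) : ℝ) * (1 - x) ^ (j - 1) * (-1)) x := by
      have := ((hasDerivAt_id x).const_sub 1).fun_pow j
      simpa using this
    exact h1.mul h2
  set G : ℕ → ℝ := fun j =>
    (M.choose j : ℝ) * ((M - j : ℕ) : ℝ) * x ^ (M - 1 - j) * (1 - x) ^ j with hG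
  set F : ℕ → ℝ := fun j => if j = 0 then 0 else G (j - 1) with hF
  have hstep : ∀ j ∈ Finset.range K, D j = F (j + 1) - F j := by
    intro j hj
    have hjK : j < K := Finset.mem_range.1 hj
    have hjM : j < M := lt_of_lt_of_le hjK hKM
    cases j with
    | zero =>
      simp only [hD, hF, hG]
      norm_num
    | succ s =>
      simp only [hD, hF, hG]
      norm_num
      have hc : ((M.choose (s + 1) * (s + 1) : ℕ) : ℝ) = ((M.choose s * (M - s) : ℕ) : ℝ) := by
        exact_mod_cast congrArg (Nat.cast (R := ℝ)) (Nat.choose_succ_right_eq M s)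
      push_cast at hc
      have e1 : M - (s + 1) - 1 = M - 1 - (s + 1) := by omega
      have e2 : M - (s + 1) = M - 1 - s := by omega
      rw [e1, e2]
      linear_combination (-(x ^ (M - 1 - s)) * (1 - x) ^ s) * hc
  have hsum2 : ∑ j ∈ Finset.range K, D j = G (K - 1) := by
    rw [Finset.sum_congr rfl hstep, Finset.sum_range_sub]
    obtain ⟨k, rfl⟩ : ∃ k, K = k + 1 := ⟨K - 1, by omega⟩
    simp [hF]
  have hfinal : G (K - 1) = ((N : ℝ) - 1) * ((N - 2).choose (K - 1) : ℝ) *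
      (x ^ (N - 1 - K) * (1 - x) ^ (K - 1)) := by
    have hco : M.choose (K - 1) * (M - (K - 1)) = M * ((M - 1).choose (K - 1)) := by
      have h1 := Nat.choose_succ_right_eq M (K - 1)
      have h2 := Nat.add_one_mul_choose_eq (M - 1) (K - 1)
      have e3 : K - 1 + 1 = K := by omega
      have e4 : M - 1 + 1 = M := by omega
      rw [e3] at h1
      rw [e4, e3] at h2
      omega
    have hcoR : ((M.choose (K - 1) * (M - (K - 1)) : ℕ) : ℝ)
        = ((M * ((M - 1).choose (K - 1)) : ℕ) : ℝ) := by exact_mod_cast hco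
    push_cast at hcoR
    have e5 : M - 1 - (K - 1) = N - 1 - K := by omega
    have e6 : N - 2 = M - 1 := by omega
    have e7 : ((M : ℕ) : ℝ) = (N : ℝ) - 1 := by
      rw [hM]; push_cast [Nat.cast_sub (by omega : 1 ≤ N)]; ring
    rw [hG]
    simp only
    rw [e5, e6, ← e7]
    linear_combination (x ^ (N - 1 - K) * (1 - x) ^ (K - 1)) * hcoR
  rw [hsum2, hfinal] at hsum
  exact hsum

theorem stmt_17 (N K : ℕ) (hN : 2 ≤ N) (hK : 1 ≤ K) (hKN : K ≤ N - 1)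
    (R c : ℝ) (hR : 0 < R) (hc : 0 < c)
    (x1 xp : ℝ) (hx1 : 0 < x1) (hx1p : x1 < xp) (hxp : xp ≤ 1)
    (hfeas : ∀ x ∈ Set.Icc (0 : ℝ) x1, stratUnif N K R c x ≤ x)
    (heq : stratUnif N K R c x1 = x1)
    (hder1 : ∀ x ∈ Set.Ioo x1 xp, 1 < deriv (stratUnif N K R c) x)
    (hderp : deriv (stratUnif N K R c) xp = 1)
    (hder2 : ∀ x ∈ Set.Ioc xp 1, deriv (stratUnif N K R c) x ≤ 1) :
    ∀ q ∈ Set.Ioc (0 : ℝ) 1, ∀ x ∈ Set.Icc (0 : ℝ) 1,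
      stratCal N K R c x1 xp x ≤ q →
        R / K * topKProbUnif N K x - c * stratCal N K R c x1 xp x / q ≤
          R / K * topKProbUnif N K q - c * stratCal N K R c x1 xp q / q := by
  intro q hq x hx hxq
  obtain ⟨hq0, hq1⟩ := hq
  obtain ⟨hx0, hxle1⟩ := hx
  set β := stratUnif N K R c with hβ
  set T := topKProbUnif N K with hT
  set s := stratCal N K R c x1 xp with hsdef
  set Cc : ℝ := ((N - 2).choose (K - 1) : ℝ) with hCc
  set A : ℝ := R * ((N : ℝ) - 1) / (c * K) * Cc with hA
  set B : ℝ := R * ((N : ℝ) - 1) / K * Cc with hB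
  have hKR : (0 : ℝ) < K := by exact_mod_cast Nat.pos_of_ne_zero (by omega)
  have hN1 : (0 : ℝ) < (N : ℝ) - 1 := by
    have : (2 : ℝ) ≤ (N : ℝ) := by exact_mod_cast hN
    linarith
  have hCc0 : (0 : ℝ) < Cc := by
    rw [hCc]; exact_mod_cast Nat.choose_pos (by omega : K - 1 ≤ N - 2)
  have hA0 : 0 < A := by
    rw [hA]; exact mul_pos (div_pos (mul_pos hR hN1) (mul_pos hc hKR)) hCc0
  have hB0 : 0 < B := by
    rw [hB]; exact mul_pos (div_pos (mul_pos hR hN1) hKR) hCc0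
  have hcA : c * A = B := by
    rw [hA, hB]; field_simp
  have hβd : ∀ t : ℝ, HasDerivAt β (A * (t ^ (N - K) * (1 - t) ^ (K - 1))) t := by
    intro t; rw [hβ, hA, hCc]; exact stratUnif_hasDerivAt N K R c t
  have hTd : ∀ t : ℝ, HasDerivAt T
      (((N : ℝ) - 1) * Cc * (t ^ (N - 1 - K) * (1 - t) ^ (K - 1))) t := by
    intro t; rw [hT, hCc]; exact topK_hasDerivAt N K hN hK hKN t
  have hpow : ∀ t : ℝ, t ^ (N - K) = t ^ (N - 1 - K) * t := by
    intro t; rw [show N - K = (N - 1 - K) + 1 by omega, pow_succ]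
  -- the auxiliary function g
  have hgd : ∀ t : ℝ, HasDerivAt (fun y => R / K * T y - c / q * β y)
      (B * (t ^ (N - 1 - K) * (1 - t) ^ (K - 1)) * (1 - t / q)) t := by
    intro t
    have h := ((hTd t).const_mul (R / K)).sub ((hβd t).const_mul (c / q))
    refine h.congr_deriv ?_
    rw [hpow t, hA, hB]
    field_simp
  have hgdiff : Differentiable ℝ (fun y => R / K * T y - c / q * β y) :=
    fun t => (hgd t).differentiableAt
  -- the auxiliary function m
  have hmd : ∀ t : ℝ, HasDerivAt (fun y => R / K * T y - c / q * y)
      (B * (t ^ (N - 1 - K) * (1 - t) ^ (K - 1)) - c / q) t := by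
    intro t
    have h := ((hTd t).const_mul (R / K)).sub ((hasDerivAt_id t).const_mul (c / q))
    refine h.congr_deriv ?_
    rw [hB]; ring
  have hmdiff : Differentiable ℝ (fun y => R / K * T y - c / q * y) :=
    fun t => (hmd t).differentiableAt
  have hβdiff : Differentiable ℝ β := fun t => (hβd t).differentiableAt
  -- monotonicity of g on [0,q]
  have hgmono : MonotoneOn (fun y => R / K * T y - c / q * β y) (Set.Icc (0 : ℝ) q) := by
    apply monotoneOn_of_deriv_nonneg (convex_Icc _ _) hgdiff.continuous.continuousOn
      hgdiff.differentiableOn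
    intro t ht
    rw [interior_Icc] at ht
    rw [(hgd t).deriv]
    have h1 : (0 : ℝ) ≤ t ^ (N - 1 - K) := pow_nonneg ht.1.le _
    have h2 : (0 : ℝ) ≤ (1 - t) ^ (K - 1) := pow_nonneg (by linarith [ht.2] : (0:ℝ) ≤ 1 - t) _
    have h3 : (0 : ℝ) ≤ 1 - t / q := by
      have : t / q ≤ 1 := (div_le_one hq0).2 ht.2.le
      linarith
    exact mul_nonneg (mul_nonneg hB0.le (mul_nonneg h1 h2)) h3
  -- antitonicity of g on [q,1]
  have hganti : AntitoneOn (fun y => R / K * T y - c / q * β y) (Set.Icc q 1) := by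
    apply antitoneOn_of_deriv_nonpos (convex_Icc _ _) hgdiff.continuous.continuousOn
      hgdiff.differentiableOn
    intro t ht
    rw [interior_Icc] at ht
    rw [(hgd t).deriv]
    have h1 : (0 : ℝ) ≤ t ^ (N - 1 - K) := pow_nonneg (by linarith [ht.1] : (0:ℝ) ≤ t) _
    have h2 : (0 : ℝ) ≤ (1 - t) ^ (K - 1) := pow_nonneg (by linarith [ht.2] : (0:ℝ) ≤ 1 - t) _
    have h3 : 1 - t / q ≤ 0 := by
      have : (1 : ℝ) < t / q := (one_lt_div hq0).2 ht.1
      linarith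
    exact mul_nonpos_iff.mpr (Or.inl ⟨mul_nonneg hB0.le (mul_nonneg h1 h2), h3⟩)
  -- monotonicity of m on [x1, min xp q]
  have hmmono : MonotoneOn (fun y => R / K * T y - c / q * y) (Set.Icc x1 (min xp q)) := by
    apply monotoneOn_of_deriv_nonneg (convex_Icc _ _) hmdiff.continuous.continuousOn
      hmdiff.differentiableOn
    intro t ht
    rw [interior_Icc] at ht
    obtain ⟨ht1, ht2⟩ := ht
    have htxp : t < xp := lt_of_lt_of_le ht2 (min_le_left _ _)
    have htq : t < q := lt_of_lt_of_le ht2 (min_le_right _ _)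
    have ht0 : 0 < t := hx1.trans ht1
    have hder := hder1 t ⟨ht1, htxp⟩
    rw [(hβd t).deriv] at hder
    rw [(hmd t).deriv]
    have key : c / t ≤ B * (t ^ (N - 1 - K) * (1 - t) ^ (K - 1)) := by
      have h1 : c / t * 1 ≤ c / t * (A * (t ^ (N - K) * (1 - t) ^ (K - 1))) :=
        mul_le_mul_of_nonneg_left hder.le (by positivity)
      calc c / t = c / t * 1 := by ring
        _ ≤ c / t * (A * (t ^ (N - K) * (1 - t) ^ (K - 1))) := h1
        _ = B * (t ^ (N - 1 - K) * (1 - t) ^ (K - 1)) := by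
            rw [hpow t, ← hcA]; field_simp
    have h2 : c / q ≤ c / t := by
      rw [div_le_div_iff₀ hq0 ht0]; nlinarith
    linarith
  -- monotonicity of β on [0,1]
  have hβmono : MonotoneOn β (Set.Icc (0 : ℝ) 1) := by
    apply monotoneOn_of_deriv_nonneg (convex_Icc _ _) hβdiff.continuous.continuousOn
      hβdiff.differentiableOn
    intro t ht
    rw [interior_Icc] at ht
    rw [(hβd t).deriv]
    have h1 : (0 : ℝ) ≤ t ^ (N - K) := pow_nonneg ht.1.le _
    have h2 : (0 : ℝ) ≤ (1 - t) ^ (K - 1) := pow_nonneg (by linarith [ht.2] : (0:ℝ) ≤ 1 - t) _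
    exact mul_nonneg hA0.le (mul_nonneg h1 h2)
  -- values of s
  have hs_low : ∀ t : ℝ, t ≤ x1 → s t = β t := by
    intro t h; rw [hsdef]; simp only [stratCal, if_pos h]; rfl
  have hs_mid : ∀ t : ℝ, x1 < t → t ≤ xp → s t = t := by
    intro t h1 h2; rw [hsdef]; simp only [stratCal, if_neg (not_le.2 h1), if_pos h2]
  have hs_high : ∀ t : ℝ, xp < t → s t = β t - β xp + xp := by
    intro t h; rw [hsdef]
    simp only [stratCal, if_neg (not_le.2 (hx1p.trans h)), if_neg (not_le.2 h)]; rfl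
  have hβx1 : β x1 = x1 := heq
  -- rewrite goal divisions
  have ediv : ∀ u v : ℝ, u - c * v / q = u - c / q * v := by intro u v; ring
  rw [ediv, ediv]
  -- main case analysis
  rcases le_or_gt x q with hxcq | hxcq
  · -- x ≤ q
    by_cases hq_x1 : q ≤ x1
    · have hgx := hgmono ⟨hx0, hxcq⟩ ⟨hq0.le, le_refl q⟩ hxcq
      simp only at hgx
      rw [hs_low x (hxcq.trans hq_x1), hs_low q hq_x1]
      linarith
    · push_neg at hq_x1
      by_cases hq_xp : q ≤ xp
      · by_cases hx_x1 : x ≤ x1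
        · have hgx := hgmono ⟨hx0, hxcq⟩ ⟨hx1.le, hq_x1.le⟩ hx_x1
          simp only at hgx
          rw [hβx1] at hgx
          have hmx := hmmono ⟨le_refl x1, le_min hx1p.le hq_x1.le⟩
            ⟨hq_x1.le, le_min hq_xp (le_refl q)⟩ hq_x1.le
          simp only at hmx
          rw [hs_low x hx_x1, hs_mid q hq_x1 hq_xp]
          linarith
        · push_neg at hx_x1
          have hmx := hmmono ⟨hx_x1.le, le_min (hxcq.trans hq_xp) hxcq⟩
            ⟨hq_x1.le, le_min hq_xp (le_refl q)⟩ hxcq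
          simp only at hmx
          rw [hs_mid x hx_x1 (hxcq.trans hq_xp), hs_mid q hq_x1 hq_xp]
          linarith
      · push_neg at hq_xp
        have hgpq := hgmono ⟨by linarith, hq_xp.le⟩ ⟨hq0.le, le_refl q⟩ hq_xp.le
        simp only at hgpq
        by_cases hx_xp : x ≤ xp
        · by_cases hx_x1 : x ≤ x1
          · have hgx := hgmono ⟨hx0, hxcq⟩ ⟨hx1.le, by linarith⟩ hx_x1
            simp only at hgx
            rw [hβx1] at hgx
            have hmx := hmmono ⟨le_refl x1, le_min hx1p.le (by linarith)⟩
              ⟨hx1p.le, le_min (le_refl xp) hq_xp.le⟩ hx1p.le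
            simp only at hmx
            rw [hs_low x hx_x1, hs_high q hq_xp]
            linarith
          · push_neg at hx_x1
            have hmx := hmmono ⟨hx_x1.le, le_min hx_xp (by linarith)⟩
              ⟨hx1p.le, le_min (le_refl xp) hq_xp.le⟩ hx_xp
            simp only at hmx
            rw [hs_mid x hx_x1 hx_xp, hs_high q hq_xp]
            linarith
        · push_neg at hx_xp
          have hgx := hgmono ⟨hx0, hxcq⟩ ⟨hq0.le, le_refl q⟩ hxcq
          simp only at hgx
          rw [hs_high x hx_xp, hs_high q hq_xp]
          linarith
  · -- q < x
    by_cases hx_x1 : x ≤ x1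
    · have hgx := hganti ⟨le_refl q, hq1⟩ ⟨hxcq.le, hxle1⟩ hxcq.le
      simp only at hgx
      rw [hs_low x hx_x1, hs_low q (hxcq.le.trans hx_x1)]
      linarith
    · push_neg at hx_x1
      by_cases hx_xp : x ≤ xp
      · rw [hs_mid x hx_x1 hx_xp] at hxq
        linarith
      · push_neg at hx_xp
        have hβpx : β xp ≤ β x := hβmono ⟨by linarith, hxp⟩ ⟨hx0, hxle1⟩ hx_xp.le
        have hq_ge : xp ≤ q := by
          rw [hs_high x hx_xp] at hxq
          linarith
        have hsq : s q = β q - β xp + xp := by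
          rcases eq_or_lt_of_le hq_ge with hEq | hlt
          · rw [hs_mid q (hEq ▸ hx1p) hEq.ge, ← hEq]; ring
          · exact hs_high q hlt
        rw [hs_high x hx_xp, hsq]
        have hgx := hganti ⟨le_refl q, hq1⟩ ⟨hxcq.le, hxle1⟩ hxcq.le
        simp only at hgx
        linarith
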